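/- Converting a source vertex of an acyclic orientation of a finite graph into a sink yields again an acyclic orientation. -/

import Mathlib

/-- Converting a source vertex of an acyclic orientation of a finite graph into a
sink yields again an acyclic orientation.  An orientation of `G` is modeled as a
relation `ω` supported on the edges of `G`, choosing exactly one direction per edge;
acyclicity means there is no directed cycle (no `v` with `TransGen ω v v`). -/
theorem stmt_4 {V : Type*} [Fintype V] (G : SimpleGraph V)
    (ω : V → V → Prop)
    (hsupp : ∀ u v, ω u v → G.Adj u v)
    (hchoice : ∀ u v, G.Adj u v → (ω u v ↔ ¬ ω v u))
    (hacyc : ∀ v, ¬ Relation.TransGen ω v v)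
    (s : V) (hsource : ∀ v, ¬ ω v s)
    (ω' : V → V → Prop)
    (hω' : ∀ u v, ω' u v ↔ ((u = s ∨ v = s) ∧ ω v u) ∨ (u ≠ s ∧ v ≠ s ∧ ω u v)) :
    (∀ u v, ω' u v → G.Adj u v) ∧
    (∀ u v, G.Adj u v → (ω' u v ↔ ¬ ω' v u)) ∧
    (∀ v, ¬ Relation.TransGen ω' v v) := by
  -- s is a sink for ω'
  have hsink : ∀ x, ¬ ω' s x := by
    intro x hx
    rcases (hω' s x).1 hx with ⟨_, h⟩ | ⟨hne, _⟩
    · exact hsource x h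
    · exact hne rfl
  have hnoS : ∀ b, ¬ Relation.TransGen ω' s b := by
    intro b hb
    induction hb using Relation.TransGen.head_induction_on with
    | single h => exact hsink _ h
    | head h _ _ => exact hsink _ h
  refine ⟨?_, ?_, ?_⟩
  · intro u v h
    rcases (hω' u v).1 h with ⟨_, h⟩ | ⟨_, _, h⟩
    · exact (hsupp v u h).symm
    · exact hsupp u v h
  · intro u v hadj
    by_cases hu : u = s
    · subst hu
      have hv : v ≠ u := fun h => G.irrefl (h ▸ hadj)
      rw [hω', hω']
      constructor
      · rintro (⟨_, h⟩ | ⟨hne, _⟩)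
        · rintro (⟨_, h'⟩ | ⟨_, hne, _⟩)
          · exact ((hchoice v u hadj.symm).1 h) h'
          · exact hne rfl
        · exact absurd rfl hne
      · intro hn
        left
        refine ⟨Or.inl rfl, ?_⟩
        by_contra hvu
        exact hn (Or.inl ⟨Or.inr rfl, ((hchoice u v hadj).2 hvu)⟩)
    · by_cases hv : v = s
      · subst hv
        rw [hω', hω']
        constructor
        · rintro (⟨_, h⟩ | ⟨_, hne, _⟩)
          · rintro (⟨_, h'⟩ | ⟨hne, _⟩)
            · exact ((hchoice v u hadj.symm).1 h) h'
            · exact hne rfl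
          · exact absurd rfl hne
        · intro hn
          left
          refine ⟨Or.inr rfl, ?_⟩
          by_contra hvu
          exact hn (Or.inl ⟨Or.inl rfl, ((hchoice u v hadj).2 hvu)⟩)
      · rw [hω', hω']
        constructor
        · rintro (⟨hs, _⟩ | ⟨_, _, h⟩)
          · rcases hs with h | h
            · exact absurd h hu
            · exact absurd h hv
          · rintro (⟨hs, _⟩ | ⟨_, _, h'⟩)
            · rcases hs with h' | h'
              · exact hv h'
              · exact hu h'
            · exact ((hchoice u v hadj).1 h) h'
        · intro hn
          right
          refine ⟨hu, hv, ?_⟩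
          rw [hchoice u v hadj]
          intro hvu
          exact hn (Or.inr ⟨hv, hu, hvu⟩)
  · intro v hv
    by_cases hvs : v = s
    · exact hnoS v (hvs ▸ hv)
    · have key : ∀ a b, Relation.TransGen ω' a b → a ≠ s → b ≠ s → Relation.TransGen ω a b := by
        intro a b h
        induction h using Relation.TransGen.head_induction_on with
        | single h =>
          intro ha hb
          rcases (hω' _ _).1 h with ⟨hs, _⟩ | ⟨_, _, h⟩
          · rcases hs with h' | h' <;> [exact absurd h' ha; exact absurd h' hb]
          · exact Relation.TransGen.single h
        | @head a' c h htg IH =>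
          intro ha hb
          have hc : c ≠ s := fun hcs => hnoS b (hcs ▸ htg)
          have hac : ω a' c := by
            rcases (hω' _ _).1 h with ⟨hs, _⟩ | ⟨_, _, h⟩
            · rcases hs with h' | h' <;> [exact absurd h' ha; exact absurd h' hc]
            · exact h
          exact Relation.TransGen.head hac (IH hc hb)
      exact hacyc v (key v v hv hvs hvs)
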